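/- Let A be a densely defined closed C-symmetric operator. A closed operator à is a C-self-adjoint extension of A if and only if A ⊆ à ⊆ CA*C and the subspace L_{Ã} = D(Ã) ⊖ D(A) (orthogonal complement in H_{CA*C}) satisfies L_{Ã} ⊕ (A*C) L_{Ã} = M_{B*}, an orthogonal decomposition in the graph-norm space H_{B*} where B = CAC. -/

import Mathlib

open scoped InnerProductSpace
open LinearPMap

variable {H : Type*} [NormedAddCommGroup H] [InnerProductSpace ℂ H]

/-- A conjugation on a complex inner product space: a conjugate-linear involution
satisfying `⟪Cx, Cy⟫ = ⟪y, x⟫`. -/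
structure Conjugation (H : Type*) [NormedAddCommGroup H] [InnerProductSpace ℂ H] where
  toFun : H → H
  map_add' : ∀ x y, toFun (x + y) = toFun x + toFun y
  map_smulc : ∀ (c : ℂ) (x : H), toFun (c • x) = (starRingEnd ℂ c) • toFun x
  invol : ∀ x, toFun (toFun x) = x
  inner_conj : ∀ x y, ⟪toFun x, toFun y⟫_ℂ = ⟪y, x⟫_ℂ

namespace Conjugation

instance : CoeFun (Conjugation H) fun _ => H → H := ⟨toFun⟩

lemma map_zero (C : Conjugation H) : C 0 = 0 := by
  have := C.map_smulc 0 0; simpa using this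

lemma mem_of_mem_image (C : Conjugation H) {S : Set H} {x : H} (hx : x ∈ C.toFun '' S) :
    C x ∈ S := by
  obtain ⟨t, ht, rfl⟩ := hx
  rwa [C.invol]

/-- The image `C(D)` of a subspace under a conjugation, as a subspace. -/
def conjDomain (C : Conjugation H) (D : Submodule ℂ H) : Submodule ℂ H where
  carrier := C.toFun '' (D : Set H)
  add_mem' := by
    rintro a b ⟨x, hx, rfl⟩ ⟨y, hy, rfl⟩
    exact ⟨x + y, D.add_mem hx hy, (C.map_add' x y).symm ▸ rfl⟩
  zero_mem' := ⟨0, D.zero_mem, C.map_zero⟩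
  smul_mem' := by
    rintro c a ⟨x, hx, rfl⟩
    refine ⟨(starRingEnd ℂ c) • x, D.smul_mem _ hx, ?_⟩
    rw [C.map_smulc]; simp

lemma conj_mem (C : Conjugation H) {D : Submodule ℂ H} {x : H} (hx : x ∈ C.conjDomain D) :
    C x ∈ D := C.mem_of_mem_image hx

/-- The operator `C T C` with domain `C(D(T))`. -/
noncomputable def conjOp (C : Conjugation H) (T : H →ₗ.[ℂ] H) : H →ₗ.[ℂ] H where
  domain := C.conjDomain T.domain
  toFun :=
  { toFun := fun x => C (T ⟨C ↑x, C.conj_mem x.2⟩)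
    map_add' := by
      intro x y
      have h : (⟨C ↑(x + y), C.conj_mem (x + y).2⟩ : T.domain)
          = ⟨C ↑x, C.conj_mem x.2⟩ + ⟨C ↑y, C.conj_mem y.2⟩ := by
        apply Subtype.ext; simp [C.map_add']
      try dsimp only
      rw [h, T.map_add, C.map_add']
    map_smul' := by
      intro c x
      have h : (⟨C ↑(c • x), C.conj_mem (c • x).2⟩ : T.domain)
          = (starRingEnd ℂ c) • (⟨C ↑x, C.conj_mem x.2⟩ : T.domain) := by
        apply Subtype.ext; simp [C.map_smulc]
      try dsimp only
      rw [h, T.map_smul, C.map_smulc]; simp }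

/-- `A` is `C`-symmetric: `CAC ⊆ A*`. -/
noncomputable def IsCSymmetric [CompleteSpace H] (C : Conjugation H) (A : H →ₗ.[ℂ] H) : Prop :=
  C.conjOp A ≤ A†

/-- `A` is `C`-self-adjoint: `CAC = A*`. -/
noncomputable def IsCSelfAdjoint [CompleteSpace H] (C : Conjugation H) (A : H →ₗ.[ℂ] H) : Prop :=
  C.conjOp A = A†

end Conjugation
variable [CompleteSpace H]

open scoped InnerProductSpace in
/-- The kernel `N(I + A*CA*C)`. -/
noncomputable def kerIplusAstarCAstarC (C : Conjugation H) (A : H →ₗ.[ℂ] H) : Set H :=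
  {g | ∃ hg : g ∈ (C.conjOp (A†)).domain, ∃ h2 : (C.conjOp (A†)) ⟨g, hg⟩ ∈ (A†).domain,
      g + A† ⟨(C.conjOp (A†)) ⟨g, hg⟩, h2⟩ = 0}

/-- The kernel `N(I + CA*CA*)`. -/
noncomputable def kerIplusCAstarCAstar (C : Conjugation H) (A : H →ₗ.[ℂ] H) : Set H :=
  {g | ∃ hg : g ∈ (A†).domain, ∃ h2 : A† ⟨g, hg⟩ ∈ (C.conjOp (A†)).domain,
      g + (C.conjOp (A†)) ⟨A† ⟨g, hg⟩, h2⟩ = 0}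

/-- The kernel `N(I + A*B*)` where `B = CAC`. -/
noncomputable def kerIplusAstarBstar (C : Conjugation H) (A : H →ₗ.[ℂ] H) : Set H :=
  {g | ∃ hg : g ∈ ((C.conjOp A)†).domain, ∃ h2 : (C.conjOp A)† ⟨g, hg⟩ ∈ (A†).domain,
      g + A† ⟨(C.conjOp A)† ⟨g, hg⟩, h2⟩ = 0}

open scoped InnerProductSpace in
/-- The orthogonal complement of `S` within `W`, with respect to the graph inner
product `⟪f, g⟫ + ⟪Tf, Tg⟫` of `T`. -/
def graphOrthComplIn (T : H →ₗ.[ℂ] H) (W S : Set H) : Set H :=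
  {g | g ∈ W ∧ ∃ hg : g ∈ T.domain, ∀ f ∈ S, ∀ hf : f ∈ T.domain,
      ⟪f, g⟫_ℂ + ⟪T ⟨f, hf⟩, T ⟨g, hg⟩⟫_ℂ = 0}

/-- The deficiency space `N(T* - μ)`. -/
noncomputable def defectSpace (T : H →ₗ.[ℂ] H) (μ : ℂ) : Submodule ℂ H where
  carrier := {z | ∃ hz : z ∈ (T†).domain, T† ⟨z, hz⟩ = μ • z}
  add_mem' := by
    rintro a b ⟨ha, hva⟩ ⟨hb, hvb⟩
    refine ⟨(T†).domain.add_mem ha hb, ?_⟩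
    have h : (⟨a + b, (T†).domain.add_mem ha hb⟩ : (T†).domain) = ⟨a, ha⟩ + ⟨b, hb⟩ := rfl
    rw [h, LinearPMap.map_add, hva, hvb, smul_add]
  zero_mem' := by
    refine ⟨(T†).domain.zero_mem, ?_⟩
    have h : (⟨(0 : H), (T†).domain.zero_mem⟩ : (T†).domain) = 0 := rfl
    rw [h, LinearPMap.map_zero, smul_zero]
  smul_mem' := by
    rintro c a ⟨ha, hva⟩
    refine ⟨(T†).domain.smul_mem c ha, ?_⟩
    have h : (⟨c • a, (T†).domain.smul_mem c ha⟩ : (T†).domain) = c • ⟨a, ha⟩ := rfl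
    rw [h, LinearPMap.map_smul, hva, smul_comm]


/-- The subspace `L_Ã = D(Ã) ⊖ D(A)`, the orthogonal complement of `D(A)` in `D(Ã)`
with respect to the graph inner product of `CA*C`. -/
noncomputable def LAset (C : Conjugation H) (A Atil : H →ₗ.[ℂ] H) : Set H :=
  graphOrthComplIn (C.conjOp (A†)) (Atil.domain : Set H) (A.domain : Set H)

/-- The set `(A*C) L_Ã`. -/
noncomputable def SLAset (C : Conjugation H) (A Atil : H →ₗ.[ℂ] H) : Set H :=
  {x : H | ∃ g ∈ LAset C A Atil, ∃ hg : C g ∈ (A†).domain, A† ⟨C g, hg⟩ = x}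

section Aux

namespace Conjugation

variable {C : Conjugation H}

lemma map_neg (C : Conjugation H) (x : H) : C (-x) = -C x := by
  have := C.map_smulc (-1) x; simpa using this

lemma map_sub (C : Conjugation H) (x y : H) : C (x - y) = C x - C y := by
  rw [sub_eq_add_neg, C.map_add', C.map_neg, sub_eq_add_neg]

lemma inner_conj_left (C : Conjugation H) (x y : H) : ⟪C x, y⟫_ℂ = ⟪C y, x⟫_ℂ := by
  conv_lhs => rw [← C.invol y]
  exact C.inner_conj x (C y)

lemma mem_conjOp_domain {T : H →ₗ.[ℂ] H} {x : H} :
    x ∈ (C.conjOp T).domain ↔ C x ∈ T.domain :=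
  ⟨fun h => C.conj_mem h, fun h => ⟨C x, h, C.invol x⟩⟩

lemma conjOp_apply (T : H →ₗ.[ℂ] H) (x : H) (hx : x ∈ (C.conjOp T).domain)
    (hx' : C x ∈ T.domain) :
    (C.conjOp T) ⟨x, hx⟩ = C (T ⟨C x, hx'⟩) := rfl

lemma conjOp_mono {T T' : H →ₗ.[ℂ] H} (h : T ≤ T') : C.conjOp T ≤ C.conjOp T' := by
  constructor
  · intro x hx
    exact mem_conjOp_domain.mpr (h.1 (mem_conjOp_domain.mp hx))
  · rintro x y hxy
    have hx' : C (x : H) ∈ T.domain := C.conj_mem x.2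
    have hy' : C (y : H) ∈ T'.domain := C.conj_mem y.2
    have e1 : (C.conjOp T) x = C (T ⟨C (x : H), hx'⟩) := rfl
    have e2 : (C.conjOp T') y = C (T' ⟨C (y : H), hy'⟩) := rfl
    rw [e1, e2]
    congr 1
    exact h.2 (by simp [hxy])

lemma conjOp_conjOp (T : H →ₗ.[ℂ] H) : C.conjOp (C.conjOp T) = T := by
  apply LinearPMap.ext
  · ext x
    rw [mem_conjOp_domain, mem_conjOp_domain, C.invol]
  · intro x hx hy
    have h1 : C x ∈ (C.conjOp T).domain := C.conj_mem hx
    have h2 : C (C x) ∈ T.domain := C.conj_mem h1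
    have e1 : (C.conjOp (C.conjOp T)) ⟨x, hx⟩ = C (C (T ⟨C (C x), h2⟩)) := rfl
    rw [e1, C.invol (T ⟨C (C x), h2⟩)]
    congr 1
    exact Subtype.ext (C.invol x)

end Conjugation

end Aux
set_option linter.unusedSectionVars false

section Aux2

open LinearPMap

lemma adjoint_anti {T T' : H →ₗ.[ℂ] H} (hd : Dense (T.domain : Set H)) (h : T ≤ T') :
    T'† ≤ T† := by
  have hd' : Dense (T'.domain : Set H) := hd.mono h.1
  constructor
  · intro y hy
    apply mem_adjoint_domain_of_exists
    refine ⟨T'† ⟨y, hy⟩, fun v => ?_⟩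
    have h1 : T v = T' ⟨(v : H), h.1 v.2⟩ := h.2 rfl
    rw [adjoint_isFormalAdjoint hd' ⟨y, hy⟩ ⟨(v : H), h.1 v.2⟩, ← h1]
  · rintro x y hxy
    refine (adjoint_apply_eq hd y fun v => ?_).symm
    have h1 : T v = T' ⟨(v : H), h.1 v.2⟩ := h.2 rfl
    rw [adjoint_isFormalAdjoint hd' x ⟨(v : H), h.1 v.2⟩, ← h1, hxy]

lemma exists_graph_decomp (T R : H →ₗ.[ℂ] H) (hR : R.IsClosed) (hRT : R ≤ T)
    {x : H} (hx : x ∈ T.domain) :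
    ∃ (p : H) (hp : p ∈ R.domain) (q : H) (hq : q ∈ T.domain),
      x = p + q ∧
      T ⟨x, hx⟩ = T ⟨p, hRT.1 hp⟩ + T ⟨q, hq⟩ ∧
      ∀ f (hf : f ∈ R.domain), ⟪f, q⟫_ℂ + ⟪R ⟨f, hf⟩, T ⟨q, hq⟩⟫_ℂ = 0 := by
  classical
  set e := WithLp.linearEquiv 2 ℂ (H × H) with he
  set K : Submodule ℂ (WithLp 2 (H × H)) := R.graph.comap (e : _ →ₗ[ℂ] H × H) with hK
  have inner_eq : ∀ u v : WithLp 2 (H × H),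
      ⟪u, v⟫_ℂ = ⟪(e u).1, (e v).1⟫_ℂ + ⟪(e u).2, (e v).2⟫_ℂ := fun u v => rfl
  have hKclosed : IsClosed (K : Set (WithLp 2 (H × H))) := by
    have hs : (K : Set (WithLp 2 (H × H))) =
        (WithLp.prodContinuousLinearEquiv 2 ℂ H H) ⁻¹' (R.graph : Set (H × H)) := rfl
    rw [hs]
    exact hR.preimage (WithLp.prodContinuousLinearEquiv 2 ℂ H H).continuous
  haveI : CompleteSpace K := hKclosed.completeSpace_coe
  obtain ⟨y, hy, z, hz, hv⟩ := K.exists_add_mem_mem_orthogonal (e.symm (x, T ⟨x, hx⟩))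
  rw [Submodule.mem_comap, mem_graph_iff] at hy
  obtain ⟨⟨p, hp⟩, hp1, hp2⟩ := hy
  have hq : x - p ∈ T.domain := T.domain.sub_mem hx (hRT.1 hp)
  refine ⟨p, hp, x - p, hq, by abel, ?_, ?_⟩
  · have hsplit : (⟨x, hx⟩ : T.domain) = ⟨p, hRT.1 hp⟩ + ⟨x - p, hq⟩ := by
      apply Subtype.ext; simp
    rw [hsplit, T.map_add]
  · have hRpTp : R ⟨p, hp⟩ = T ⟨p, hRT.1 hp⟩ := hRT.2 rfl
    have hez : e z = (x - p, T ⟨x - p, hq⟩) := by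
      have h1 : z = e.symm (x, T ⟨x, hx⟩) - y := by rw [hv]; abel
      have hsplit : (⟨x, hx⟩ : T.domain) = ⟨p, hRT.1 hp⟩ + ⟨x - p, hq⟩ := by
        apply Subtype.ext; simp
      have h2 : e y = (p, R ⟨p, hp⟩) := by
        apply Prod.ext
        · exact hp1.symm
        · exact hp2.symm
      rw [h1, _root_.map_sub, LinearEquiv.apply_symm_apply, h2]
      rw [hsplit, T.map_add, hRpTp]
      apply Prod.ext <;> simp
    intro f hf
    have hu : e.symm ((f : H), R ⟨f, hf⟩) ∈ K := by
      rw [Submodule.mem_comap]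
      have : (e : WithLp 2 (H × H) →ₗ[ℂ] H × H) (e.symm ((f : H), R ⟨f, hf⟩))
          = ((f : H), R ⟨f, hf⟩) := e.apply_symm_apply _
      rw [this]
      exact R.mem_graph ⟨f, hf⟩
    have h0 := (Submodule.mem_orthogonal K z).mp hz _ hu
    rw [inner_eq, LinearEquiv.apply_symm_apply, hez] at h0
    exact h0

end Aux2
section Aux3

open LinearPMap Conjugation

variable {C : Conjugation H} {A : H →ₗ.[ℂ] H}

lemma inner_C_right (C : Conjugation H) (x y : H) : ⟪x, C y⟫_ℂ = ⟪y, C x⟫_ℂ := by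
  conv_lhs => rw [← C.invol x]
  exact C.inner_conj (C x) y

lemma A_le_S (hsym : C.IsCSymmetric A) : A ≤ C.conjOp (A†) := by
  have h : C.conjOp (C.conjOp A) ≤ C.conjOp (A†) := Conjugation.conjOp_mono hsym
  rwa [Conjugation.conjOp_conjOp] at h

lemma S_eq_A (hsym : C.IsCSymmetric A) {f : H} (hf : f ∈ A.domain)
    (hf' : f ∈ (C.conjOp (A†)).domain) :
    (C.conjOp (A†)) ⟨f, hf'⟩ = A ⟨f, hf⟩ :=
  ((A_le_S hsym).2 (x := ⟨f, hf⟩) (y := ⟨f, hf'⟩) rfl).symm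

lemma conj_mem_adjoint_domain (hsym : C.IsCSymmetric A) {f : H} (hf : f ∈ A.domain) :
    C f ∈ (A†).domain :=
  Conjugation.mem_conjOp_domain.mp ((A_le_S hsym).1 hf)

lemma adj_pair (hA : Dense (A.domain : Set H)) {y f : H} (hy : y ∈ (A†).domain)
    (hf : f ∈ A.domain) :
    ⟪A† ⟨y, hy⟩, f⟫_ℂ = ⟪y, A ⟨f, hf⟩⟫_ℂ :=
  adjoint_isFormalAdjoint hA ⟨y, hy⟩ ⟨f, hf⟩

lemma adj_conj_eq (hsym : C.IsCSymmetric A) {f : H} (hf : f ∈ A.domain)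
    (hf' : C f ∈ (A†).domain) :
    A† ⟨C f, hf'⟩ = C (A ⟨f, hf⟩) := by
  have h1 : C f ∈ (C.conjOp A).domain := Conjugation.mem_conjOp_domain.mpr (by rwa [C.invol])
  have h2 := hsym.2 (x := ⟨C f, h1⟩) (y := ⟨C f, hf'⟩) rfl
  rw [← h2]
  have h3 : C (C f) ∈ A.domain := by rwa [C.invol]
  have e : (C.conjOp A) ⟨C f, h1⟩ = C (A ⟨C (C f), h3⟩) := rfl
  rw [e]
  congr 2
  exact Subtype.ext (C.invol f)

lemma M_spec (hA : Dense (A.domain : Set H)) {g : H} (hg : g ∈ kerIplusAstarCAstarC C A) :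
    ∃ (h1 : C g ∈ (A†).domain) (h2 : C (A† ⟨C g, h1⟩) ∈ (A†).domain),
      A† ⟨C (A† ⟨C g, h1⟩), h2⟩ = -g ∧
      ∀ f (hf : f ∈ A.domain), ⟪f, g⟫_ℂ + ⟪A ⟨f, hf⟩, C (A† ⟨C g, h1⟩)⟫_ℂ = 0 := by
  obtain ⟨hgS, h2, heq⟩ := hg
  have h1 : C g ∈ (A†).domain := Conjugation.mem_conjOp_domain.mp hgS
  have h2' : C (A† ⟨C g, h1⟩) ∈ (A†).domain := h2
  have heq' : g + A† ⟨C (A† ⟨C g, h1⟩), h2'⟩ = 0 := heq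
  have hval : A† ⟨C (A† ⟨C g, h1⟩), h2'⟩ = -g := eq_neg_of_add_eq_zero_right heq'
  refine ⟨h1, h2', hval, fun f hf => ?_⟩
  have hp : ⟪A† ⟨C (A† ⟨C g, h1⟩), h2'⟩, f⟫_ℂ = ⟪C (A† ⟨C g, h1⟩), A ⟨f, hf⟩⟫_ℂ :=
    adj_pair hA h2' hf
  rw [hval] at hp
  have h4 := congrArg (starRingEnd ℂ) hp
  simp only [inner_conj_symm] at h4
  rw [← h4]
  simp

lemma mem_M_of (hA : Dense (A.domain : Set H)) {g : H} (h1 : C g ∈ (A†).domain)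
    (horth : ∀ f (hf : f ∈ A.domain),
      ⟪f, g⟫_ℂ + ⟪A ⟨f, hf⟩, C (A† ⟨C g, h1⟩)⟫_ℂ = 0) :
    g ∈ kerIplusAstarCAstarC C A := by
  have hgS : g ∈ (C.conjOp (A†)).domain := Conjugation.mem_conjOp_domain.mpr h1
  have key : ∀ v : A.domain, ⟪-g, (v : H)⟫_ℂ = ⟪C (A† ⟨C g, h1⟩), A v⟫_ℂ := by
    intro v
    have h : ⟪(v : H), g⟫_ℂ + ⟪A v, C (A† ⟨C g, h1⟩)⟫_ℂ = 0 := horth (v : H) v.2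
    have h' : ⟪A v, C (A† ⟨C g, h1⟩)⟫_ℂ = -⟪(v : H), g⟫_ℂ := eq_neg_of_add_eq_zero_right h
    have h4 := congrArg (starRingEnd ℂ) h'
    rw [inner_conj_symm, _root_.map_neg, inner_conj_symm] at h4
    rw [h4, inner_neg_left]
  have h2 : C (A† ⟨C g, h1⟩) ∈ (A†).domain :=
    mem_adjoint_domain_of_exists _ ⟨-g, key⟩
  have hval : A† ⟨C (A† ⟨C g, h1⟩), h2⟩ = -g :=
    adjoint_apply_eq hA _ key
  have h2'' : (C.conjOp (A†)) ⟨g, hgS⟩ ∈ (A†).domain := h2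
  refine ⟨hgS, h2'', ?_⟩
  have e : A† ⟨(C.conjOp (A†)) ⟨g, hgS⟩, h2''⟩ = A† ⟨C (A† ⟨C g, h1⟩), h2⟩ := rfl
  rw [e, hval]
  abel

end Aux3
section Aux4

open LinearPMap Conjugation

variable {C : Conjugation H} {A Atil : H →ₗ.[ℂ] H}

lemma mem_L_of (hsym : C.IsCSymmetric A) {x : H} (hxA : x ∈ Atil.domain)
    (h1 : C x ∈ (A†).domain)
    (horth : ∀ f (hf : f ∈ A.domain),
      ⟪f, x⟫_ℂ + ⟪A ⟨f, hf⟩, C (A† ⟨C x, h1⟩)⟫_ℂ = 0) :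
    x ∈ LAset C A Atil := by
  have hgS : x ∈ (C.conjOp (A†)).domain := Conjugation.mem_conjOp_domain.mpr h1
  refine ⟨hxA, hgS, fun f hf hfS => ?_⟩
  have e2 : (C.conjOp (A†)) ⟨x, hgS⟩ = C (A† ⟨C x, h1⟩) := rfl
  rw [S_eq_A hsym hf hfS, e2]
  exact horth f hf

lemma L_spec (hsym : C.IsCSymmetric A) {x : H} (hx : x ∈ LAset C A Atil) :
    x ∈ Atil.domain ∧ ∃ h1 : C x ∈ (A†).domain,
      ∀ f (hf : f ∈ A.domain),
        ⟪f, x⟫_ℂ + ⟪A ⟨f, hf⟩, C (A† ⟨C x, h1⟩)⟫_ℂ = 0 := by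
  obtain ⟨hxA, hgS, horth⟩ := hx
  have h1 : C x ∈ (A†).domain := Conjugation.mem_conjOp_domain.mp hgS
  refine ⟨hxA, h1, fun f hf => ?_⟩
  have hfS : f ∈ (C.conjOp (A†)).domain := (A_le_S hsym).1 hf
  have h := horth f hf hfS
  have e2 : (C.conjOp (A†)) ⟨x, hgS⟩ = C (A† ⟨C x, h1⟩) := rfl
  rwa [S_eq_A hsym hf hfS, e2] at h

lemma L_subset_M (hA : Dense (A.domain : Set H)) (hsym : C.IsCSymmetric A) :
    LAset C A Atil ⊆ kerIplusAstarCAstarC C A := by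
  intro x hx
  obtain ⟨-, h1, horth⟩ := L_spec hsym hx
  exact mem_M_of hA h1 horth

lemma S_of_SL (hA : Dense (A.domain : Set H)) {g : H} (hg : C g ∈ (A†).domain)
    (hgM : g ∈ kerIplusAstarCAstarC C A)
    (hy : A† ⟨C g, hg⟩ ∈ (C.conjOp (A†)).domain) :
    (C.conjOp (A†)) ⟨A† ⟨C g, hg⟩, hy⟩ = -(C g) := by
  obtain ⟨h1, h2, hval, -⟩ := M_spec hA hgM
  have hcy : C (A† ⟨C g, hg⟩) ∈ (A†).domain := by
    have e : C (A† ⟨C g, hg⟩) = C (A† ⟨C g, h1⟩) := rfl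
    rw [e]; exact h2
  have e1 : (C.conjOp (A†)) ⟨A† ⟨C g, hg⟩, hy⟩ = C (A† ⟨C (A† ⟨C g, hg⟩), hcy⟩) := rfl
  have e2 : A† ⟨C (A† ⟨C g, hg⟩), hcy⟩ = -g := hval
  rw [e1, e2, C.map_neg]

lemma SL_mem_SDomain (hA : Dense (A.domain : Set H)) {g : H} (hg : C g ∈ (A†).domain)
    (hgM : g ∈ kerIplusAstarCAstarC C A) :
    A† ⟨C g, hg⟩ ∈ (C.conjOp (A†)).domain := by
  obtain ⟨h1, h2, hval, -⟩ := M_spec hA hgM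
  apply Conjugation.mem_conjOp_domain.mpr
  have e : C (A† ⟨C g, hg⟩) = C (A† ⟨C g, h1⟩) := rfl
  rw [e]; exact h2

lemma SL_subset_M (hA : Dense (A.domain : Set H)) (hsym : C.IsCSymmetric A)
    (hL : LAset C A Atil ⊆ kerIplusAstarCAstarC C A) :
    SLAset C A Atil ⊆ kerIplusAstarCAstarC C A := by
  rintro y ⟨g, hgL, hg, rfl⟩
  have hgM := hL hgL
  have hyS : A† ⟨C g, hg⟩ ∈ (C.conjOp (A†)).domain := SL_mem_SDomain hA hg hgM
  have hSy : (C.conjOp (A†)) ⟨A† ⟨C g, hg⟩, hyS⟩ = -(C g) := S_of_SL hA hg hgM hyS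
  have h2' : (C.conjOp (A†)) ⟨A† ⟨C g, hg⟩, hyS⟩ ∈ (A†).domain := by
    rw [hSy]; exact (A†).domain.neg_mem hg
  refine ⟨hyS, h2', ?_⟩
  have hmk : (⟨(C.conjOp (A†)) ⟨A† ⟨C g, hg⟩, hyS⟩, h2'⟩ : (A†).domain)
      = -⟨C g, hg⟩ := by
    apply Subtype.ext
    show (C.conjOp (A†)) ⟨A† ⟨C g, hg⟩, hyS⟩ = ((-⟨C g, hg⟩ : (A†).domain) : H)
    rw [hSy]; rfl
  rw [hmk, LinearPMap.map_neg]
  abel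

lemma Phi_sa (hA : Dense (A.domain : Set H)) (hext : A ≤ Atil)
    (hsa' : C.conjOp Atil = Atil†) {x g : H}
    (hxA : x ∈ Atil.domain) (hgA : g ∈ Atil.domain)
    (hxS : C x ∈ (A†).domain) (hgS : C g ∈ (A†).domain) :
    ⟪x, A† ⟨C g, hgS⟩⟫_ℂ = ⟪g, A† ⟨C x, hxS⟩⟫_ℂ := by
  have hAd : Dense (Atil.domain : Set H) := hA.mono hext.1
  have hanti := adjoint_anti hA hext
  have hdom := congrArg LinearPMap.domain hsa'
  -- C g ∈ dual domain
  have hgc : C g ∈ (C.conjOp Atil).domain :=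
    Conjugation.mem_conjOp_domain.mpr (by rwa [C.invol])
  have hgdual : C g ∈ (Atil†).domain := hdom ▸ hgc
  have hxc : C x ∈ (C.conjOp Atil).domain :=
    Conjugation.mem_conjOp_domain.mpr (by rwa [C.invol])
  have hxdual : C x ∈ (Atil†).domain := hdom ▸ hxc
  have hgval : Atil† ⟨C g, hgdual⟩ = C (Atil ⟨g, hgA⟩) := by
    have h := (le_of_eq hsa').2 (x := ⟨C g, hgc⟩) (y := ⟨C g, hgdual⟩) rfl
    rw [← h]
    have e : (C.conjOp Atil) ⟨C g, hgc⟩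
        = C (Atil ⟨C (C g), by rwa [C.invol]⟩) := rfl
    rw [e]
    congr 2
    exact Subtype.ext (C.invol g)
  have hxval : Atil† ⟨C x, hxdual⟩ = C (Atil ⟨x, hxA⟩) := by
    have h := (le_of_eq hsa').2 (x := ⟨C x, hxc⟩) (y := ⟨C x, hxdual⟩) rfl
    rw [← h]
    have e : (C.conjOp Atil) ⟨C x, hxc⟩
        = C (Atil ⟨C (C x), by rwa [C.invol]⟩) := rfl
    rw [e]
    congr 2
    exact Subtype.ext (C.invol x)
  have hgA' : A† ⟨C g, hgS⟩ = C (Atil ⟨g, hgA⟩) := by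
    rw [← hgval]
    exact (hanti.2 (x := ⟨C g, hgdual⟩) (y := ⟨C g, hgS⟩) rfl).symm
  have hxA' : A† ⟨C x, hxS⟩ = C (Atil ⟨x, hxA⟩) := by
    rw [← hxval]
    exact (hanti.2 (x := ⟨C x, hxdual⟩) (y := ⟨C x, hxS⟩) rfl).symm
  rw [hgA', hxA']
  -- goal : ⟪x, C (Atil g)⟫ = ⟪g, C (Atil x)⟫
  have P := adjoint_isFormalAdjoint hAd ⟨C x, hxdual⟩ ⟨g, hgA⟩
  rw [hxval] at P
  -- P : ⟪C (Atil x), g⟫ = ⟪C x, Atil g⟫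
  have P' := congrArg (starRingEnd ℂ) P
  rw [inner_conj_symm, inner_conj_symm] at P'
  -- P' : ⟪g, C (Atil x)⟫ = ⟪Atil g, C x⟫
  rw [inner_C_right C x (Atil ⟨g, hgA⟩), P']

end Aux4
section Aux5

open LinearPMap Conjugation

variable {C : Conjugation H} {A Atil : H →ₗ.[ℂ] H}

lemma Atil_le_S (hA : Dense (A.domain : Set H)) (hext : A ≤ Atil)
    (hsa' : C.conjOp Atil = Atil†) : Atil ≤ C.conjOp (A†) := by
  have h1 : Atil† ≤ A† := adjoint_anti hA hext
  have h2 : C.conjOp (Atil†) ≤ C.conjOp (A†) := Conjugation.conjOp_mono h1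
  rw [← hsa', Conjugation.conjOp_conjOp] at h2
  exact h2

lemma forward_orth (hA : Dense (A.domain : Set H)) (hsym : C.IsCSymmetric A)
    (hext : A ≤ Atil) (hsa' : C.conjOp Atil = Atil†)
    (hL : LAset C A Atil ⊆ kerIplusAstarCAstarC C A) :
    ∀ x ∈ LAset C A Atil, ∀ y ∈ SLAset C A Atil,
      ∀ (hx : x ∈ (C.conjOp (A†)).domain) (hy : y ∈ (C.conjOp (A†)).domain),
      ⟪x, y⟫_ℂ + ⟪(C.conjOp (A†)) ⟨x, hx⟩, (C.conjOp (A†)) ⟨y, hy⟩⟫_ℂ = 0 := by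
  intro x hxL y hySL hx hy
  obtain ⟨g, hgL, hg, rfl⟩ := hySL
  have hgM := hL hgL
  have hSy : (C.conjOp (A†)) ⟨A† ⟨C g, hg⟩, hy⟩ = -(C g) := S_of_SL hA hg hgM hy
  have hxS : C x ∈ (A†).domain := Conjugation.mem_conjOp_domain.mp hx
  have e1 : (C.conjOp (A†)) ⟨x, hx⟩ = C (A† ⟨C x, hxS⟩) := rfl
  rw [hSy, e1, inner_neg_right, C.inner_conj]
  have hxA : x ∈ Atil.domain := (L_spec hsym hxL).1
  have hgA : g ∈ Atil.domain := (L_spec hsym hgL).1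
  rw [Phi_sa hA hext hsa' hxA hgA hxS hg]
  ring

lemma M_decomp (hA : Dense (A.domain : Set H)) (hsym : C.IsCSymmetric A)
    (hext : A ≤ Atil) (hclosed : Atil.IsClosed) (hAS : Atil ≤ C.conjOp (A†))
    (hsa' : C.conjOp Atil = Atil†) :
    ∀ m ∈ kerIplusAstarCAstarC C A,
      ∃ x ∈ LAset C A Atil, ∃ y ∈ SLAset C A Atil, m = x + y := by
  intro m hm
  obtain ⟨h1m, h2m, hvalm, horthm⟩ := M_spec hA hm
  have hmS : m ∈ (C.conjOp (A†)).domain := Conjugation.mem_conjOp_domain.mpr h1m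
  obtain ⟨p, hp, q, hq, hm_eq, hTm_eq, horthq⟩ :=
    exists_graph_decomp (C.conjOp (A†)) Atil hclosed hAS hmS
  have hpS : p ∈ (C.conjOp (A†)).domain := hAS.1 hp
  have h1p : C p ∈ (A†).domain := Conjugation.mem_conjOp_domain.mp hpS
  have h1q : C q ∈ (A†).domain := Conjugation.mem_conjOp_domain.mp hq
  -- p ∈ L
  have hpL : p ∈ LAset C A Atil := by
    apply mem_L_of hsym hp h1p
    intro f hf
    have hfA : f ∈ Atil.domain := hext.1 hf
    have h2 := horthq f hfA
    have hAf : Atil ⟨f, hfA⟩ = A ⟨f, hf⟩ := (hext.2 rfl).symm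
    rw [hAf] at h2
    have h1 := horthm f hf
    have e_m : C (A† ⟨C m, h1m⟩) = (C.conjOp (A†)) ⟨m, hmS⟩ := rfl
    rw [e_m] at h1
    have e_p : C (A† ⟨C p, h1p⟩) = (C.conjOp (A†)) ⟨p, hpS⟩ := rfl
    rw [e_p]
    have hSp : (C.conjOp (A†)) ⟨p, hpS⟩
        = (C.conjOp (A†)) ⟨m, hmS⟩ - (C.conjOp (A†)) ⟨q, hq⟩ := by
      have e : (C.conjOp (A†)) ⟨p, hAS.1 hp⟩ = (C.conjOp (A†)) ⟨p, hpS⟩ := rfl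
      rw [e] at hTm_eq
      rw [eq_sub_of_add_eq hTm_eq.symm]
    have hpm : p = m - q := by rw [hm_eq]; abel
    have hip : ⟪f, p⟫_ℂ = ⟪f, m⟫_ℂ - ⟪f, q⟫_ℂ := by rw [hpm, inner_sub_right]
    rw [hip, hSp, inner_sub_right]
    linear_combination h1 - h2
  -- q ∈ M
  have hqM : q ∈ kerIplusAstarCAstarC C A := by
    apply mem_M_of hA h1q
    intro f hf
    have hfA : f ∈ Atil.domain := hext.1 hf
    have h2 := horthq f hfA
    have hAf : Atil ⟨f, hfA⟩ = A ⟨f, hf⟩ := (hext.2 rfl).symm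
    rw [hAf] at h2
    have e_q : C (A† ⟨C q, h1q⟩) = (C.conjOp (A†)) ⟨q, hq⟩ := rfl
    rw [e_q]
    exact h2
  obtain ⟨h1q', h2q, hvalq, -⟩ := M_spec hA hqM
  -- S q ∈ D(Atil†)
  have hSqdual : C (A† ⟨C q, h1q⟩) ∈ (Atil†).domain := by
    apply mem_adjoint_domain_of_exists
    refine ⟨-q, fun u => ?_⟩
    have h2 := horthq (u : H) u.2
    have e_q : C (A† ⟨C q, h1q⟩) = (C.conjOp (A†)) ⟨q, hq⟩ := rfl
    rw [e_q]
    have h' : ⟪Atil u, (C.conjOp (A†)) ⟨q, hq⟩⟫_ℂ = -⟪(u : H), q⟫_ℂ := by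
      have e : Atil ⟨(u : H), u.2⟩ = Atil u := rfl
      rw [e] at h2
      exact eq_neg_of_add_eq_zero_right h2
    have h4 := congrArg (starRingEnd ℂ) h'
    rw [inner_conj_symm, _root_.map_neg, inner_conj_symm] at h4
    rw [h4, inner_neg_left]
  have hdom := congrArg LinearPMap.domain hsa'
  have hSqc : C (A† ⟨C q, h1q⟩) ∈ (C.conjOp Atil).domain := hdom ▸ hSqdual
  have hCSq : C (C (A† ⟨C q, h1q⟩)) ∈ Atil.domain := Conjugation.conj_mem C hSqc
  have hCSq' : A† ⟨C q, h1q⟩ ∈ Atil.domain := by rwa [C.invol] at hCSq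
  -- the element g := -(A† ⟨C q, h1q⟩)
  set gq : H := -(A† ⟨C q, h1q⟩) with hgq
  have hgqA : gq ∈ Atil.domain := Atil.domain.neg_mem hCSq'
  have h1gq : C gq ∈ (A†).domain := by
    rw [hgq, C.map_neg]
    exact (A†).domain.neg_mem h2q
  have hAgq : A† ⟨C gq, h1gq⟩ = q := by
    have hmk : (⟨C gq, h1gq⟩ : (A†).domain) = -⟨C (A† ⟨C q, h1q⟩), h2q⟩ := by
      apply Subtype.ext
      show C gq = -(C (A† ⟨C q, h1q⟩))
      rw [hgq, C.map_neg]
    rw [hmk, LinearPMap.map_neg, hvalq]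
    abel
  have hgqL : gq ∈ LAset C A Atil := by
    apply mem_L_of hsym hgqA h1gq
    intro f hf
    rw [hAgq, hgq]
    have hCf : C f ∈ (A†).domain := conj_mem_adjoint_domain hsym hf
    have hpair : ⟪A† ⟨C q, h1q⟩, f⟫_ℂ = ⟪C q, A ⟨f, hf⟩⟫_ℂ := adj_pair hA h1q hf
    have h4 := congrArg (starRingEnd ℂ) hpair
    rw [inner_conj_symm, inner_conj_symm] at h4
    rw [inner_neg_right, h4, inner_C_right C (A ⟨f, hf⟩) q]
    ring
  refine ⟨p, hpL, q, ⟨gq, hgqL, h1gq, hAgq⟩, hm_eq⟩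

end Aux5
section Aux6

open LinearPMap Conjugation

variable {C : Conjugation H} {A Atil : H →ₗ.[ℂ] H}

lemma Phi0 (hA : Dense (A.domain : Set H)) (hsym : C.IsCSymmetric A) {w f : H}
    (hw : C w ∈ (A†).domain) (hf : f ∈ A.domain) (hCf : C f ∈ (A†).domain) :
    ⟪A† ⟨C w, hw⟩, f⟫_ℂ = ⟪A† ⟨C f, hCf⟩, w⟫_ℂ :=
  calc ⟪A† ⟨C w, hw⟩, f⟫_ℂ = ⟪C w, A ⟨f, hf⟩⟫_ℂ := adj_pair hA hw hf
    _ = ⟪C (A ⟨f, hf⟩), w⟫_ℂ := (inner_conj_left C (A ⟨f, hf⟩) w).symm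
    _ = ⟪A† ⟨C f, hCf⟩, w⟫_ℂ := by rw [adj_conj_eq hsym hf hCf]

lemma LL_pair (hA : Dense (A.domain : Set H)) (hsym : C.IsCSymmetric A)
    (hO : ∀ x ∈ LAset C A Atil, ∀ y ∈ SLAset C A Atil,
      ∀ (hx : x ∈ (C.conjOp (A†)).domain) (hy : y ∈ (C.conjOp (A†)).domain),
      ⟪x, y⟫_ℂ + ⟪(C.conjOp (A†)) ⟨x, hx⟩, (C.conjOp (A†)) ⟨y, hy⟩⟫_ℂ = 0)
    (hL : LAset C A Atil ⊆ kerIplusAstarCAstarC C A)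
    {l l' : H} (hlL : l ∈ LAset C A Atil) (hl'L : l' ∈ LAset C A Atil)
    (h1l : C l ∈ (A†).domain) (h1l' : C l' ∈ (A†).domain) :
    ⟪A† ⟨C l, h1l⟩, l'⟫_ℂ = ⟪A† ⟨C l', h1l'⟩, l⟫_ℂ := by
  have hl'M := hL hl'L
  have hySL : A† ⟨C l', h1l'⟩ ∈ SLAset C A Atil := ⟨l', hl'L, h1l', rfl⟩
  have hyS := SL_mem_SDomain hA h1l' hl'M
  have hlS : l ∈ (C.conjOp (A†)).domain := Conjugation.mem_conjOp_domain.mpr h1l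
  have h := hO l hlL _ hySL hlS hyS
  rw [S_of_SL hA h1l' hl'M hyS] at h
  have e : (C.conjOp (A†)) ⟨l, hlS⟩ = C (A† ⟨C l, h1l⟩) := rfl
  rw [e, inner_neg_right, C.inner_conj] at h
  have h2 : ⟪l, A† ⟨C l', h1l'⟩⟫_ℂ = ⟪l', A† ⟨C l, h1l⟩⟫_ℂ := by linear_combination h
  have h3 := congrArg (starRingEnd ℂ) h2
  rw [inner_conj_symm, inner_conj_symm] at h3
  exact h3.symm

lemma decomp_L (hsym : C.IsCSymmetric A) (hclosedA : A.IsClosed) (hext : A ≤ Atil)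
    (hAS : Atil ≤ C.conjOp (A†)) {x : H} (hxA : x ∈ Atil.domain) :
    ∃ (f : H) (hf : f ∈ A.domain) (l : H), l ∈ LAset C A Atil ∧ x = f + l := by
  obtain ⟨f, hf, l, hl, hx_eq, -, horth⟩ := exists_graph_decomp Atil A hclosedA hext hxA
  refine ⟨f, hf, l, ?_, hx_eq⟩
  have hlS : l ∈ (C.conjOp (A†)).domain := hAS.1 hl
  have h1l : C l ∈ (A†).domain := Conjugation.mem_conjOp_domain.mp hlS
  apply mem_L_of hsym hl h1l
  intro e he
  have h := horth e he
  have eS : C (A† ⟨C l, h1l⟩) = (C.conjOp (A†)) ⟨l, hlS⟩ := rfl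
  have eA : Atil ⟨l, hl⟩ = (C.conjOp (A†)) ⟨l, hlS⟩ := hAS.2 rfl
  rw [eS, ← eA]
  exact h

lemma Phi_symm_rev (hA : Dense (A.domain : Set H)) (hsym : C.IsCSymmetric A)
    (hclosedA : A.IsClosed) (hext : A ≤ Atil) (hAS : Atil ≤ C.conjOp (A†))
    (hO : ∀ x ∈ LAset C A Atil, ∀ y ∈ SLAset C A Atil,
      ∀ (hx : x ∈ (C.conjOp (A†)).domain) (hy : y ∈ (C.conjOp (A†)).domain),
      ⟪x, y⟫_ℂ + ⟪(C.conjOp (A†)) ⟨x, hx⟩, (C.conjOp (A†)) ⟨y, hy⟩⟫_ℂ = 0)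
    (hL : LAset C A Atil ⊆ kerIplusAstarCAstarC C A)
    {x u : H} (hxA : x ∈ Atil.domain) (huA : u ∈ Atil.domain)
    (hx : C x ∈ (A†).domain) (hu : C u ∈ (A†).domain) :
    ⟪A† ⟨C x, hx⟩, u⟫_ℂ = ⟪A† ⟨C u, hu⟩, x⟫_ℂ := by
  obtain ⟨f, hf, l, hlL, hxfl⟩ := decomp_L hsym hclosedA hext hAS hxA
  obtain ⟨f', hf', l', hl'L, hufl⟩ := decomp_L hsym hclosedA hext hAS huA
  have hCf : C f ∈ (A†).domain := conj_mem_adjoint_domain hsym hf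
  have hCf' : C f' ∈ (A†).domain := conj_mem_adjoint_domain hsym hf'
  obtain ⟨-, h1l, -⟩ := L_spec hsym hlL
  obtain ⟨-, h1l', -⟩ := L_spec hsym hl'L
  have hxadd : A† ⟨C x, hx⟩ = A† ⟨C f, hCf⟩ + A† ⟨C l, h1l⟩ := by
    have hmk : (⟨C x, hx⟩ : (A†).domain) = ⟨C f, hCf⟩ + ⟨C l, h1l⟩ := by
      apply Subtype.ext
      show C x = C f + C l
      rw [hxfl, C.map_add']
    rw [hmk, LinearPMap.map_add]
  have huadd : A† ⟨C u, hu⟩ = A† ⟨C f', hCf'⟩ + A† ⟨C l', h1l'⟩ := by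
    have hmk : (⟨C u, hu⟩ : (A†).domain) = ⟨C f', hCf'⟩ + ⟨C l', h1l'⟩ := by
      apply Subtype.ext
      show C u = C f' + C l'
      rw [hufl, C.map_add']
    rw [hmk, LinearPMap.map_add]
  have e1 : ⟪A† ⟨C f, hCf⟩, f'⟫_ℂ = ⟪A† ⟨C f', hCf'⟩, f⟫_ℂ := Phi0 hA hsym hCf hf' hCf'
  have e2 : ⟪A† ⟨C l, h1l⟩, f'⟫_ℂ = ⟪A† ⟨C f', hCf'⟩, l⟫_ℂ := Phi0 hA hsym h1l hf' hCf'
  have e3 : ⟪A† ⟨C f, hCf⟩, l'⟫_ℂ = ⟪A† ⟨C l', h1l'⟩, f⟫_ℂ :=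
    (Phi0 hA hsym h1l' hf hCf).symm
  have e4 : ⟪A† ⟨C l, h1l⟩, l'⟫_ℂ = ⟪A† ⟨C l', h1l'⟩, l⟫_ℂ :=
    LL_pair hA hsym hO hL hlL hl'L h1l h1l'
  rw [hxadd, huadd, inner_add_left, inner_add_left]
  have hu2 : ∀ w : H, ⟪w, u⟫_ℂ = ⟪w, f'⟫_ℂ + ⟪w, l'⟫_ℂ := by
    intro w; rw [hufl, inner_add_right]
  have hx2 : ∀ w : H, ⟪w, x⟫_ℂ = ⟪w, f⟫_ℂ + ⟪w, l⟫_ℂ := by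
    intro w; rw [hxfl, inner_add_right]
  rw [hu2, hu2, hx2, hx2]
  linear_combination e1 + e2 + e3 + e4

lemma pairing_rev (hA : Dense (A.domain : Set H)) (hsym : C.IsCSymmetric A)
    (hclosedA : A.IsClosed) (hext : A ≤ Atil) (hAS : Atil ≤ C.conjOp (A†))
    (hO : ∀ x ∈ LAset C A Atil, ∀ y ∈ SLAset C A Atil,
      ∀ (hx : x ∈ (C.conjOp (A†)).domain) (hy : y ∈ (C.conjOp (A†)).domain),
      ⟪x, y⟫_ℂ + ⟪(C.conjOp (A†)) ⟨x, hx⟩, (C.conjOp (A†)) ⟨y, hy⟩⟫_ℂ = 0)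
    (hL : LAset C A Atil ⊆ kerIplusAstarCAstarC C A)
    {x : H} (hxA : x ∈ Atil.domain) :
    ∀ u : Atil.domain, ⟪C (Atil ⟨x, hxA⟩), (u : H)⟫_ℂ = ⟪C x, Atil u⟫_ℂ := by
  intro u
  have hxS : x ∈ (C.conjOp (A†)).domain := hAS.1 hxA
  have h1x : C x ∈ (A†).domain := Conjugation.mem_conjOp_domain.mp hxS
  have huS : (u : H) ∈ (C.conjOp (A†)).domain := hAS.1 u.2
  have h1u : C (u : H) ∈ (A†).domain := Conjugation.mem_conjOp_domain.mp huS
  have ex : Atil ⟨x, hxA⟩ = C (A† ⟨C x, h1x⟩) := by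
    have e' : Atil ⟨x, hxA⟩ = (C.conjOp (A†)) ⟨x, hxS⟩ := hAS.2 rfl
    exact e'.trans rfl
  have eu : Atil u = C (A† ⟨C (u : H), h1u⟩) := by
    have e' : Atil u = (C.conjOp (A†)) ⟨(u : H), huS⟩ := hAS.2 rfl
    exact e'.trans rfl
  rw [ex, eu, C.invol, C.inner_conj]
  exact Phi_symm_rev hA hsym hclosedA hext hAS hO hL hxA u.2 h1x h1u

lemma rev_le (hA : Dense (A.domain : Set H)) (hsym : C.IsCSymmetric A)
    (hclosedA : A.IsClosed) (hext : A ≤ Atil) (hAS : Atil ≤ C.conjOp (A†))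
    (hO : ∀ x ∈ LAset C A Atil, ∀ y ∈ SLAset C A Atil,
      ∀ (hx : x ∈ (C.conjOp (A†)).domain) (hy : y ∈ (C.conjOp (A†)).domain),
      ⟪x, y⟫_ℂ + ⟪(C.conjOp (A†)) ⟨x, hx⟩, (C.conjOp (A†)) ⟨y, hy⟩⟫_ℂ = 0)
    (hL : LAset C A Atil ⊆ kerIplusAstarCAstarC C A) :
    C.conjOp Atil ≤ Atil† := by
  have hAd : Dense (Atil.domain : Set H) := hA.mono hext.1
  constructor
  · intro z hz
    have hCz : C z ∈ Atil.domain := Conjugation.mem_conjOp_domain.mp hz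
    apply mem_adjoint_domain_of_exists
    refine ⟨C (Atil ⟨C z, hCz⟩), fun u => ?_⟩
    have h := pairing_rev hA hsym hclosedA hext hAS hO hL hCz u
    rwa [C.invol] at h
  · rintro a b hab
    have hCa : C (a : H) ∈ Atil.domain := C.conj_mem a.2
    have ea : (C.conjOp Atil) a = C (Atil ⟨C (a : H), hCa⟩) := rfl
    rw [ea]
    refine (adjoint_apply_eq hAd b fun u => ?_).symm
    have h := pairing_rev hA hsym hclosedA hext hAS hO hL hCa u
    rw [C.invol] at h
    rw [← hab]
    exact h

end Aux6
section Aux7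

open LinearPMap Conjugation

variable {C : Conjugation H} {A Atil : H →ₗ.[ℂ] H}

lemma sum_inner_self_zero {s g : H} (key : ⟪s, s⟫_ℂ + ⟪g, g⟫_ℂ = 0) : s = 0 ∧ g = 0 := by
  have hres : RCLike.re ⟪s, s⟫_ℂ + RCLike.re ⟪g, g⟫_ℂ = 0 := by
    have := congrArg RCLike.re key
    simpa using this
  have hs1 : 0 ≤ RCLike.re ⟪s, s⟫_ℂ := inner_self_nonneg
  have hg1 : 0 ≤ RCLike.re ⟪g, g⟫_ℂ := inner_self_nonneg
  have hs2 : RCLike.re ⟪s, s⟫_ℂ = 0 := by linarith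
  have hg2 : RCLike.re ⟪g, g⟫_ℂ = 0 := by linarith
  constructor
  · apply (inner_self_eq_zero (𝕜 := ℂ)).mp
    rw [← inner_self_ofReal_re, hs2]
    simp
  · apply (inner_self_eq_zero (𝕜 := ℂ)).mp
    rw [← inner_self_ofReal_re, hg2]
    simp

lemma rev_dom (hA : Dense (A.domain : Set H)) (hsym : C.IsCSymmetric A)
    (hclosedA : A.IsClosed) (hext : A ≤ Atil) (hclosed : Atil.IsClosed)
    (hAS : Atil ≤ C.conjOp (A†))
    (hO : ∀ x ∈ LAset C A Atil, ∀ y ∈ SLAset C A Atil,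
      ∀ (hx : x ∈ (C.conjOp (A†)).domain) (hy : y ∈ (C.conjOp (A†)).domain),
      ⟪x, y⟫_ℂ + ⟪(C.conjOp (A†)) ⟨x, hx⟩, (C.conjOp (A†)) ⟨y, hy⟩⟫_ℂ = 0)
    (hL : LAset C A Atil ⊆ kerIplusAstarCAstarC C A)
    (hSL : SLAset C A Atil ⊆ kerIplusAstarCAstarC C A)
    (hM : ∀ m ∈ kerIplusAstarCAstarC C A,
      ∃ x ∈ LAset C A Atil, ∃ y ∈ SLAset C A Atil, m = x + y) :
    (Atil†).domain ≤ (C.conjOp Atil).domain := by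
  have hAd : Dense (Atil.domain : Set H) := hA.mono hext.1
  intro y hy
  have hyA : y ∈ (A†).domain := (adjoint_anti hA hext).1 hy
  have hCx : C (C y) ∈ (A†).domain := by rw [C.invol]; exact hyA
  have hxS : C y ∈ (C.conjOp (A†)).domain := Conjugation.mem_conjOp_domain.mpr hCx
  obtain ⟨p, hp, q, hq, hx_eq, hSx_eq, horthq⟩ :=
    exists_graph_decomp (C.conjOp (A†)) Atil hclosed hAS hxS
  have h1q : C q ∈ (A†).domain := Conjugation.mem_conjOp_domain.mp hq
  have h1p : C p ∈ (A†).domain := Conjugation.mem_conjOp_domain.mp (hAS.1 hp)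
  -- q ∈ M
  have hqM : q ∈ kerIplusAstarCAstarC C A := by
    apply mem_M_of hA h1q
    intro f hf
    have hfA : f ∈ Atil.domain := hext.1 hf
    have h2 := horthq f hfA
    have hAf : Atil ⟨f, hfA⟩ = A ⟨f, hf⟩ := (hext.2 rfl).symm
    rw [hAf] at h2
    have e_q : C (A† ⟨C q, h1q⟩) = (C.conjOp (A†)) ⟨q, hq⟩ := rfl
    rw [e_q]
    exact h2
  obtain ⟨l, hlL, s, hsSL, hqls⟩ := hM q hqM
  obtain ⟨g, hgL, hCg, hsval⟩ := hsSL
  have hgA : g ∈ Atil.domain := (L_spec hsym hgL).1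
  have hlA : l ∈ Atil.domain := (L_spec hsym hlL).1
  obtain ⟨-, h1l, -⟩ := L_spec hsym hlL
  have hgM := hL hgL
  obtain ⟨h1g, h2g, hvalg, -⟩ := M_spec hA hgM
  have hsval' : A† ⟨C g, h1g⟩ = s := hsval
  have hsM := hSL ⟨g, hgL, hCg, hsval⟩
  obtain ⟨h1s, -, -, -⟩ := M_spec hA hsM
  -- (i) : ⟪A† y, g⟫ = ⟪s, C y⟫
  have hi : ⟪A† ⟨y, hyA⟩, g⟫_ℂ = ⟪s, C y⟫_ℂ := by
    have hval_anti : Atil† ⟨y, hy⟩ = A† ⟨y, hyA⟩ :=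
      (adjoint_anti hA hext).2 (x := ⟨y, hy⟩) (y := ⟨y, hyA⟩) rfl
    have hP := adjoint_isFormalAdjoint hAd ⟨y, hy⟩ ⟨g, hgA⟩
    rw [hval_anti] at hP
    have eg : Atil ⟨g, hgA⟩ = C (A† ⟨C g, h1g⟩) := by
      have e' : Atil ⟨g, hgA⟩ = (C.conjOp (A†)) ⟨g, hAS.1 hgA⟩ := hAS.2 rfl
      exact e'.trans rfl
    rw [eg] at hP
    have h5 : ⟪y, C (A† ⟨C g, h1g⟩)⟫_ℂ = ⟪s, C y⟫_ℂ := by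
      conv_lhs => rw [← C.invol y]
      rw [C.inner_conj, hsval']
    exact hP.trans h5
  -- (ii)
  have hii : ⟪A† ⟨C p, h1p⟩, g⟫_ℂ = ⟪s, p⟫_ℂ := by
    rw [Phi_symm_rev hA hsym hclosedA hext hAS hO hL hp hgA h1p h1g, hsval']
  -- additivity
  have exy : (⟨C (C y), hCx⟩ : (A†).domain) = ⟨y, hyA⟩ := Subtype.ext (C.invol y)
  have hadd1 : A† ⟨C (C y), hCx⟩ = A† ⟨C p, h1p⟩ + A† ⟨C q, h1q⟩ := by
    have hmk : (⟨C (C y), hCx⟩ : (A†).domain) = ⟨C p, h1p⟩ + ⟨C q, h1q⟩ := by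
      apply Subtype.ext
      show C (C y) = C p + C q
      rw [hx_eq, C.map_add']
    rw [hmk, LinearPMap.map_add]
  have hadd2 : A† ⟨C q, h1q⟩ = A† ⟨C l, h1l⟩ + A† ⟨C s, h1s⟩ := by
    have hmk : (⟨C q, h1q⟩ : (A†).domain) = ⟨C l, h1l⟩ + ⟨C s, h1s⟩ := by
      apply Subtype.ext
      show C q = C l + C s
      rw [hqls, C.map_add']
    rw [hmk, LinearPMap.map_add]
  have hLL : ⟪A† ⟨C l, h1l⟩, g⟫_ℂ = ⟪s, l⟫_ℂ := by
    rw [LL_pair hA hsym hO hL hlL hgL h1l h1g, hsval']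
  have hCs_eq : A† ⟨C s, h1s⟩ = -g := by
    have hmk : (⟨C s, h1s⟩ : (A†).domain) = ⟨C (A† ⟨C g, h1g⟩), h2g⟩ := by
      apply Subtype.ext
      show C s = C (A† ⟨C g, h1g⟩)
      rw [← hsval']
    rw [hmk, hvalg]
  have E1 : ⟪A† ⟨y, hyA⟩, g⟫_ℂ = ⟪A† ⟨C (C y), hCx⟩, g⟫_ℂ := by rw [exy]
  have E3 : ⟪A† ⟨C (C y), hCx⟩, g⟫_ℂ
      = ⟪A† ⟨C p, h1p⟩, g⟫_ℂ + ⟪A† ⟨C l, h1l⟩, g⟫_ℂ + ⟪A† ⟨C s, h1s⟩, g⟫_ℂ := by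
    rw [hadd1, hadd2, inner_add_left, inner_add_left]
    ring
  have E6 : ⟪A† ⟨C s, h1s⟩, g⟫_ℂ = -⟪g, g⟫_ℂ := by rw [hCs_eq, inner_neg_left]
  have E7 : ⟪s, C y⟫_ℂ = ⟪s, p⟫_ℂ + ⟪s, l⟫_ℂ + ⟪s, s⟫_ℂ := by
    rw [hx_eq, hqls, inner_add_right, inner_add_right]
    ring
  have key : ⟪s, s⟫_ℂ + ⟪g, g⟫_ℂ = 0 := by
    linear_combination E6 - hi + E1 + E3 + hii + hLL - E7
  obtain ⟨hs0, hg0⟩ := sum_inner_self_zero key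
  have hql : q = l := by rw [hqls, hs0, add_zero]
  have hqA : q ∈ Atil.domain := by rw [hql]; exact hlA
  have horth_self := horthq q hqA
  have eq' : Atil ⟨q, hqA⟩ = (C.conjOp (A†)) ⟨q, hq⟩ := hAS.2 rfl
  rw [eq'] at horth_self
  obtain ⟨hq0, -⟩ := sum_inner_self_zero (by linear_combination horth_self :
    ⟪q, q⟫_ℂ + ⟪(C.conjOp (A†)) ⟨q, hq⟩, (C.conjOp (A†)) ⟨q, hq⟩⟫_ℂ = 0)
  have hxA : C y ∈ Atil.domain := by rw [hx_eq, hq0, add_zero]; exact hp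
  exact Conjugation.mem_conjOp_domain.mpr hxA

end Aux7
theorem stmt_9 (C : Conjugation H) (A Atil : H →ₗ.[ℂ] H) (hA : Dense (A.domain : Set H))
    (hclosedA : A.IsClosed) (hsym : C.IsCSymmetric A) (hclosed : Atil.IsClosed) :
    (A ≤ Atil ∧ C.IsCSelfAdjoint Atil) ↔
      (A ≤ Atil ∧ Atil ≤ C.conjOp (A†)
        ∧ (∀ x ∈ LAset C A Atil, ∀ y ∈ SLAset C A Atil,
            ∀ (hx : x ∈ (C.conjOp (A†)).domain) (hy : y ∈ (C.conjOp (A†)).domain),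
            ⟪x, y⟫_ℂ + ⟪(C.conjOp (A†)) ⟨x, hx⟩, (C.conjOp (A†)) ⟨y, hy⟩⟫_ℂ = 0)
        ∧ LAset C A Atil ⊆ kerIplusAstarCAstarC C A
        ∧ SLAset C A Atil ⊆ kerIplusAstarCAstarC C A
        ∧ ∀ m ∈ kerIplusAstarCAstarC C A,
            ∃ x ∈ LAset C A Atil, ∃ y ∈ SLAset C A Atil, m = x + y) := by
  constructor
  · rintro ⟨hext, hsa⟩
    have hsa' : C.conjOp Atil = Atil† := hsa
    have hAS : Atil ≤ C.conjOp (A†) := Atil_le_S hA hext hsa'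
    have hL : LAset C A Atil ⊆ kerIplusAstarCAstarC C A := L_subset_M hA hsym
    exact ⟨hext, hAS, forward_orth hA hsym hext hsa' hL, hL, SL_subset_M hA hsym hL,
      M_decomp hA hsym hext hclosed hAS hsa'⟩
  · rintro ⟨hext, hAS, hO, hL, hSL, hM⟩
    refine ⟨hext, ?_⟩
    show C.conjOp Atil = Atil†
    have hle := rev_le hA hsym hclosedA hext hAS hO hL
    exact LinearPMap.eq_of_le_of_domain_eq hle
      (le_antisymm hle.1 (rev_dom hA hsym hclosedA hext hclosed hAS hO hL hSL hM))
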